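/- Let α ∈ ℤ_p be a p-adic integer that is not a nonnegative integer and is not a p-adic Liouville number. Then for every real number η with 0 < η < 1, the sequence η^n / |n − α|_p tends to 0 as n → ∞. -/
import Mathlib


open Filter

/-- A `p`-adic integer `α` is a `p`-adic Liouville number if
`liminf ‖n - α‖^(1/n) < 1` or `liminf ‖n + α‖^(1/n) < 1`. -/
def IsPadicLiouville (p : ℕ) [Fact p.Prime] (α : ℤ_[p]) : Prop :=
  liminf (fun n : ℕ => ‖(n : ℤ_[p]) - α‖ ^ ((1 : ℝ) / n)) atTop < 1 ∨
  liminf (fun n : ℕ => ‖(n : ℤ_[p]) + α‖ ^ ((1 : ℝ) / n)) atTop < 1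

/-- If `α ∈ ℤ_p` is neither a nonnegative integer nor a `p`-adic Liouville number, then
for every `0 < η < 1`, `η^n / ‖n - α‖ → 0`. -/
theorem tendsto_pow_div_norm_sub_of_not_liouville (p : ℕ) [Fact p.Prime] (α : ℤ_[p])
    (hnat : ∀ n : ℕ, (n : ℤ_[p]) ≠ α) (hL : ¬ IsPadicLiouville p α)
    (η : ℝ) (h0 : 0 < η) (h1 : η < 1) :
    Tendsto (fun n : ℕ => η ^ n / ‖(n : ℤ_[p]) - α‖) atTop (nhds 0) := by
  have hlim : 1 ≤ liminf (fun n : ℕ => ‖(n : ℤ_[p]) - α‖ ^ ((1 : ℝ) / n)) atTop := by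
    by_contra h
    push_neg at h
    exact hL (Or.inl h)
  set c : ℝ := (η + 1) / 2 with hc
  have hc0 : 0 < c := by positivity
  have hcη : η < c := by simp only [hc]; linarith
  have hc1 : c < 1 := by simp only [hc]; linarith
  have hcob : IsBoundedUnder (· ≥ ·) atTop
      (fun n : ℕ => ‖(n : ℤ_[p]) - α‖ ^ ((1 : ℝ) / n)) :=
    ⟨0, eventually_map.2 (Eventually.of_forall fun n => Real.rpow_nonneg (norm_nonneg _) _)⟩
  have hev : ∀ᶠ n : ℕ in atTop, c < ‖(n : ℤ_[p]) - α‖ ^ ((1 : ℝ) / n) :=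
    eventually_lt_of_lt_liminf (lt_of_lt_of_le hc1 hlim) hcob
  have key : ∀ᶠ n : ℕ in atTop, η ^ n / ‖(n : ℤ_[p]) - α‖ ≤ (η / c) ^ n := by
    filter_upwards [hev, eventually_ge_atTop 1] with n hn hn1
    have hfn0 : (0 : ℝ) < ‖(n : ℤ_[p]) - α‖ := by
      rw [norm_pos_iff]
      exact sub_ne_zero_of_ne (hnat n)
    have heq : (‖(n : ℤ_[p]) - α‖ ^ ((1 : ℝ) / n)) ^ n = ‖(n : ℤ_[p]) - α‖ := by
      rw [← Real.rpow_natCast (‖(n : ℤ_[p]) - α‖ ^ ((1 : ℝ) / n)) n,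
        ← Real.rpow_mul (norm_nonneg _), one_div_mul_cancel, Real.rpow_one]
      exact_mod_cast Nat.one_le_iff_ne_zero.mp hn1
    have hcn : c ^ n < ‖(n : ℤ_[p]) - α‖ := by
      rw [← heq]
      exact pow_lt_pow_left₀ hn hc0.le (Nat.one_le_iff_ne_zero.mp hn1)
    rw [div_pow]
    apply div_le_div_of_nonneg_left (by positivity) (by positivity) hcn.le
  have hlim2 : Tendsto (fun n : ℕ => (η / c) ^ n) atTop (nhds 0) := by
    apply tendsto_pow_atTop_nhds_zero_of_lt_one (by positivity)
    rw [div_lt_one hc0]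
    exact hcη
  apply squeeze_zero' (Eventually.of_forall fun n => by positivity) key hlim2
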